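/- If ‖Â^{(n)}‖_max → 0 as n → ∞, then Property A holds: for each K ∈ ℕ there exist a constant C > 0 independent of n and an n₀ such that for all n ≥ n₀ there are pairwise disjoint non-empty subsets I_1,…,I_K ⊆ {1,…,n} with det(Â_{I_l} (Â_{I_l})ᵀ) ≥ C for every l = 1,…,K. -/

import Mathlib

open Matrix Finset

set_option linter.unusedVariables false

namespace PropA



variable {m : ℕ}

noncomputable def ip (A B : Matrix (Fin m) (Fin m) ℝ) : ℝ := ∑ i, ∑ k, A i k * B i k

lemma ip_nonneg (A : Matrix (Fin m) (Fin m) ℝ) : 0 ≤ ip A A := by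
  apply Finset.sum_nonneg; intro i _
  apply Finset.sum_nonneg; intro k _
  exact mul_self_nonneg _

lemma ip_zero_left (B : Matrix (Fin m) (Fin m) ℝ) : ip 0 B = 0 := by
  simp [ip]

lemma ip_add_left (A A' B : Matrix (Fin m) (Fin m) ℝ) :
    ip (A + A') B = ip A B + ip A' B := by
  simp only [ip, Matrix.add_apply, add_mul, ← Finset.sum_add_distrib]

lemma ip_sum_left {ι : Type*} (s : Finset ι) (F : ι → Matrix (Fin m) (Fin m) ℝ)
    (B : Matrix (Fin m) (Fin m) ℝ) :
    ip (∑ l ∈ s, F l) B = ∑ l ∈ s, ip (F l) B := by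
  induction s using Finset.cons_induction with
  | empty => simp [ip_zero_left]
  | cons a s ha ih => rw [Finset.sum_cons, Finset.sum_cons, ip_add_left, ih]

lemma ip_expand (X Y : Matrix (Fin m) (Fin m) ℝ) (a : ℝ) :
    ip (X + a • Y) (X + a • Y) = ip X X + 2 * a * ip X Y + a ^ 2 * ip Y Y := by
  simp only [ip, Matrix.add_apply, Matrix.smul_apply, smul_eq_mul, Finset.mul_sum,
    ← Finset.sum_add_distrib]
  exact Finset.sum_congr rfl fun i _ => Finset.sum_congr rfl fun k _ => by ring

noncomputable def pot (K : ℕ) (M : Fin K → Matrix (Fin m) (Fin m) ℝ) : ℝ :=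
  ∑ l, ip (M l - (K : ℝ)⁻¹ • ∑ l', M l') (M l - (K : ℝ)⁻¹ • ∑ l', M l')

lemma pot_step {K : ℕ} (hK : 0 < K) (M : Fin K → Matrix (Fin m) (Fin m) ℝ)
    (Wm : Matrix (Fin m) (Fin m) ℝ) (l₀ : Fin K)
    (hmin : ∀ l, ip (M l₀ - (K : ℝ)⁻¹ • ∑ l', M l') Wm
      ≤ ip (M l - (K : ℝ)⁻¹ • ∑ l', M l') Wm) :
    pot K (Function.update M l₀ (M l₀ + Wm)) ≤ pot K M + ip Wm Wm := by
  have hKR : (0 : ℝ) < K := by exact_mod_cast hK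
  set c : ℝ := (K : ℝ)⁻¹ with hc
  have hKc : (K : ℝ) * c = 1 := mul_inv_cancel₀ (ne_of_gt hKR)
  have hc0 : 0 ≤ c := by positivity
  have hc1 : c ≤ 1 := by
    have : (1:ℝ) ≤ (K:ℝ) := by exact_mod_cast hK
    exact inv_le_one_of_one_le₀ this
  set Sm : Matrix (Fin m) (Fin m) ℝ := ∑ l', M l' with hSm
  set E : Fin K → Matrix (Fin m) (Fin m) ℝ := fun l => M l - c • Sm with hE
  have hEsum : ∑ l, E l = 0 := by
    simp only [hE, Finset.sum_sub_distrib, Finset.sum_const, Finset.card_univ,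
      Fintype.card_fin, ← hSm, sub_eq_zero]
    rw [← Nat.cast_smul_eq_nsmul ℝ K (c • Sm), smul_smul, hKc, one_smul]
  have hipE : ∑ l, ip (E l) Wm = 0 := by
    rw [← ip_sum_left, hEsum, ip_zero_left]
  have hEl₀ : ip (E l₀) Wm ≤ 0 := by
    have h1 : (K : ℝ) * ip (E l₀) Wm ≤ ∑ l, ip (E l) Wm := by
      have := Finset.sum_le_sum (fun l (_ : l ∈ Finset.univ) => hmin l)
      simpa [Finset.sum_const, Finset.card_univ, Fintype.card_fin, nsmul_eq_mul] using this
    rw [hipE] at h1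
    nlinarith
  -- sum over updated buckets
  have hS' : ∑ l', Function.update M l₀ (M l₀ + Wm) l' = Sm + Wm := by
    rw [Finset.sum_update_of_mem (Finset.mem_univ l₀)]
    rw [show Finset.univ \ {l₀} = Finset.univ.erase l₀ by
      rw [Finset.sdiff_singleton_eq_erase]]
    have := Finset.add_sum_erase Finset.univ M (Finset.mem_univ l₀)
    rw [← hSm] at this
    rw [← this]; abel
  have hpoint : ∀ l, ip (Function.update M l₀ (M l₀ + Wm) l - c • (Sm + Wm))
        (Function.update M l₀ (M l₀ + Wm) l - c • (Sm + Wm))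
      = ip (E l) (E l) + 2 * (-c) * ip (E l) Wm + (-c) ^ 2 * ip Wm Wm
        + (if l = l₀ then 2 * ip (E l₀) Wm + (1 - 2 * c) * ip Wm Wm else 0) := by
    intro l
    by_cases h : l = l₀
    · subst h
      rw [Function.update_self, if_pos rfl]
      have harg : M l + Wm - c • (Sm + Wm) = E l + (1 - c) • Wm := by
        simp only [hE]; module
      rw [harg, ip_expand]
      ring
    · rw [Function.update_of_ne h, if_neg h]
      have harg : M l - c • (Sm + Wm) = E l + (-c) • Wm := by
        simp only [hE]; module
      rw [harg, ip_expand]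
      ring
  have hpot' : pot K (Function.update M l₀ (M l₀ + Wm))
      = pot K M + 2 * ip (E l₀) Wm + (1 - c) * ip Wm Wm := by
    unfold pot
    rw [hS']
    rw [Finset.sum_congr rfl fun l _ => hpoint l]
    rw [Finset.sum_add_distrib, Finset.sum_add_distrib, Finset.sum_add_distrib]
    rw [Finset.sum_ite_eq' Finset.univ l₀ (fun l => 2 * ip (E l₀) Wm + (1 - 2 * c) * ip Wm Wm)]
    rw [if_pos (Finset.mem_univ l₀)]
    have e1 : ∑ l, 2 * (-c) * ip (E l) Wm = 0 := by
      rw [← Finset.mul_sum, hipE, mul_zero]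
    have e2 : ∑ l : Fin K, (-c) ^ 2 * ip Wm Wm = (K : ℝ) * (c ^ 2 * ip Wm Wm) := by
      rw [Finset.sum_const, Finset.card_univ, Fintype.card_fin, nsmul_eq_mul]
      ring
    rw [e1, e2]
    have e3 : (K : ℝ) * (c ^ 2 * ip Wm Wm) = c * ip Wm Wm := by
      have h2 : (K : ℝ) * c ^ 2 = c := by
        rw [pow_two, ← mul_assoc, hKc, one_mul]
      rw [← mul_assoc, h2]
    rw [e3]
    have : ∑ l, ip (E l) (E l) = pot K M := by
      unfold pot; rfl
    rw [this]; ring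
  rw [hpot']
  have := ip_nonneg Wm
  nlinarith


noncomputable def pick {K : ℕ} (hK : 0 < K) (φ : Fin K → ℝ) : Fin K :=
  (Finset.exists_min_image Finset.univ φ ⟨⟨0, hK⟩, Finset.mem_univ _⟩).choose

lemma pick_spec {K : ℕ} (hK : 0 < K) (φ : Fin K → ℝ) : ∀ l, φ (pick hK φ) ≤ φ l := by
  intro l
  have h := (Finset.exists_min_image Finset.univ φ ⟨⟨0, hK⟩, Finset.mem_univ _⟩).choose_spec
  exact h.2 l (Finset.mem_univ l)

noncomputable def msum {n K : ℕ} (W : Fin n → Matrix (Fin m) (Fin m) ℝ)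
    (B : Fin K → Finset (Fin n)) : Fin K → Matrix (Fin m) (Fin m) ℝ :=
  fun l => ∑ j ∈ B l, W j

noncomputable def buckets {n K : ℕ} (hK : 0 < K)
    (W : Fin n → Matrix (Fin m) (Fin m) ℝ) : ℕ → Fin K → Finset (Fin n)
  | 0 => fun _ => ∅
  | t + 1 =>
    if h : t < n then
      let B := buckets hK W t
      let M := msum W B
      let φ : Fin K → ℝ := fun l => ip (M l - (K : ℝ)⁻¹ • ∑ l', M l') (W ⟨t, h⟩)
      Function.update B (pick hK φ) (insert ⟨t, h⟩ (B (pick hK φ)))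
    else buckets hK W t

lemma buckets_spec {n K : ℕ} (hK : 0 < K) (W : Fin n → Matrix (Fin m) (Fin m) ℝ) (t : ℕ) :
    (∀ l l', l ≠ l' → Disjoint (buckets hK W t l) (buckets hK W t l')) ∧
    (∀ j : Fin n, (∃ l, j ∈ buckets hK W t l) ↔ (j : ℕ) < t) ∧
    pot K (msum W (buckets hK W t))
      ≤ ∑ j ∈ Finset.univ.filter (fun j : Fin n => (j : ℕ) < t), ip (W j) (W j) := by
  induction t with
  | zero =>
    refine ⟨fun l l' _ => by simp [buckets], fun j => by simp [buckets], ?_⟩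
    simp [buckets, pot, msum, ip_zero_left, smul_zero]
  | succ t ih =>
    obtain ⟨ihd, ihm, ihp⟩ := ih
    by_cases h : t < n
    · have hbeq : buckets hK W (t + 1)
          = Function.update (buckets hK W t)
              (pick hK (fun l => ip (msum W (buckets hK W t) l
                - (K : ℝ)⁻¹ • ∑ l', msum W (buckets hK W t) l') (W ⟨t, h⟩)))
              (insert ⟨t, h⟩ (buckets hK W t
                (pick hK (fun l => ip (msum W (buckets hK W t) l
                  - (K : ℝ)⁻¹ • ∑ l', msum W (buckets hK W t) l') (W ⟨t, h⟩))))) := by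
        rw [buckets]
        simp only [dif_pos h]
      set B := buckets hK W t with hB
      set M := msum W B with hM
      set φ : Fin K → ℝ := fun l => ip (M l - (K : ℝ)⁻¹ • ∑ l', M l') (W ⟨t, h⟩) with hφ
      set l₀ := pick hK φ with hl₀
      set j₀ : Fin n := ⟨t, h⟩ with hj₀
      have hbeq' : buckets hK W (t + 1) = Function.update B l₀ (insert j₀ (B l₀)) := hbeq
      have hj₀notmem : ∀ l, j₀ ∉ B l := by
        intro l hmem
        have : (j₀ : ℕ) < t := (ihm j₀).mp ⟨l, hmem⟩
        simp [hj₀] at this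
      -- disjointness
      have hdisj : ∀ l l', l ≠ l' →
          Disjoint (buckets hK W (t+1) l) (buckets hK W (t+1) l') := by
        intro l l' hne
        rw [hbeq']
        rcases eq_or_ne l l₀ with rfl | hl
        · rw [Function.update_self, Function.update_of_ne (Ne.symm hne)]
          rw [Finset.disjoint_insert_left]
          exact ⟨hj₀notmem l', ihd _ _ hne⟩
        · rw [Function.update_of_ne hl]
          rcases eq_or_ne l' l₀ with rfl | hl'
          · rw [Function.update_self, Finset.disjoint_insert_right]
            exact ⟨hj₀notmem l, ihd _ _ hne⟩
          · rw [Function.update_of_ne hl']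
            exact ihd _ _ hne
      -- membership
      have hmem : ∀ j : Fin n, (∃ l, j ∈ buckets hK W (t+1) l) ↔ (j : ℕ) < t + 1 := by
        intro j
        rw [hbeq']
        constructor
        · rintro ⟨l, hl⟩
          rcases eq_or_ne l l₀ with rfl | hl'
          · rw [Function.update_self, Finset.mem_insert] at hl
            rcases hl with rfl | hl
            · simp [hj₀]
            · exact Nat.lt_succ_of_lt ((ihm j).mp ⟨l₀, hl⟩)
          · rw [Function.update_of_ne hl'] at hl
            exact Nat.lt_succ_of_lt ((ihm j).mp ⟨l, hl⟩)
        · intro hj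
          rcases Nat.lt_succ_iff_lt_or_eq.mp hj with hj | hj
          · obtain ⟨l, hl⟩ := (ihm j).mpr hj
            rcases eq_or_ne l l₀ with rfl | hl'
            · exact ⟨l₀, by rw [Function.update_self]; exact Finset.mem_insert_of_mem hl⟩
            · exact ⟨l, by rw [Function.update_of_ne hl']; exact hl⟩
          · refine ⟨l₀, ?_⟩
            rw [Function.update_self]
            have : j = j₀ := Fin.ext hj
            rw [this]
            exact Finset.mem_insert_self _ _
      -- msum of updated buckets
      have hmsum : msum W (Function.update B l₀ (insert j₀ (B l₀)))
          = Function.update M l₀ (M l₀ + W j₀) := by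
        funext l
        rcases eq_or_ne l l₀ with rfl | hl
        · simp only [msum, Function.update_self]
          rw [Finset.sum_insert (hj₀notmem l₀)]
          rw [hM]; simp only [msum]; abel
        · simp only [msum]
          rw [Function.update_of_ne hl, Function.update_of_ne hl]
          rfl
      -- potential
      have hpot : pot K (msum W (buckets hK W (t+1)))
          ≤ ∑ j ∈ Finset.univ.filter (fun j : Fin n => (j : ℕ) < t + 1), ip (W j) (W j) := by
        rw [hbeq', hmsum]
        have hstep := pot_step hK M (W j₀) l₀ (fun l => pick_spec hK φ l)
        have hfilter : Finset.univ.filter (fun j : Fin n => (j : ℕ) < t + 1)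
            = insert j₀ (Finset.univ.filter (fun j : Fin n => (j : ℕ) < t)) := by
          ext j
          simp only [Finset.mem_filter, Finset.mem_univ, true_and, Finset.mem_insert]
          constructor
          · intro hj
            rcases Nat.lt_succ_iff_lt_or_eq.mp hj with hj | hj
            · exact Or.inr hj
            · exact Or.inl (Fin.ext hj)
          · rintro (rfl | hj)
            · simp [hj₀]
            · exact Nat.lt_succ_of_lt hj
        rw [hfilter, Finset.sum_insert (by simp [hj₀])]
        calc pot K (Function.update M l₀ (M l₀ + W j₀))
            ≤ pot K M + ip (W j₀) (W j₀) := hstep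
          _ ≤ (∑ j ∈ Finset.univ.filter (fun j : Fin n => (j : ℕ) < t), ip (W j) (W j))
              + ip (W j₀) (W j₀) := by linarith [ihp]
          _ = _ := by ring
      exact ⟨hdisj, hmem, hpot⟩
    · have hbeq : buckets hK W (t + 1) = buckets hK W t := by
        rw [buckets]; simp only [dif_neg h]
      refine ⟨by rw [hbeq]; exact ihd, ?_, ?_⟩
      · intro j
        rw [hbeq, ihm]
        have hjn : (j : ℕ) < n := j.isLt
        have hn : n ≤ t := Nat.le_of_not_lt h
        constructor
        · exact fun hj => Nat.lt_succ_of_lt hj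
        · intro _; exact lt_of_lt_of_le hjn hn
      · rw [hbeq]
        refine le_trans ihp (Finset.sum_le_sum_of_subset_of_nonneg ?_ ?_)
        · intro j hj
          simp only [Finset.mem_filter, Finset.mem_univ, true_and] at hj ⊢
          exact Nat.lt_succ_of_lt hj
        · intro j _ _; exact ip_nonneg _




lemma det_ge_pow {m : ℕ} {M : Matrix (Fin m) (Fin m) ℝ} (hH : M.IsHermitian) {c : ℝ}
    (hc : 0 ≤ c)
    (hq : ∀ x : Fin m → ℝ, c * ∑ i, x i ^ 2 ≤ x ⬝ᵥ M *ᵥ x) :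
    c ^ m ≤ M.det := by
  have hdet : M.det = ∏ i, hH.eigenvalues i := by
    simpa using hH.det_eq_prod_eigenvalues
  have key : ∀ i, c ≤ hH.eigenvalues i := by
    intro i
    have h1 := hH.eigenvalues_eq i
    set v : Fin m → ℝ := ⇑(hH.eigenvectorBasis i) with hv
    have hnorm1 : ‖hH.eigenvectorBasis i‖ = 1 := hH.eigenvectorBasis.orthonormal.1 i
    have hnorm : ∑ k, v k ^ 2 = 1 := by
      have h2 : ‖hH.eigenvectorBasis i‖ = Real.sqrt (∑ k, ‖v k‖ ^ 2) :=
        EuclideanSpace.norm_eq _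
      rw [hnorm1] at h2
      have h3 : Real.sqrt (∑ k, ‖v k‖ ^ 2) = 1 := h2.symm
      have h4 : (∑ k, ‖v k‖ ^ 2) = 1 := by
        have := Real.sqrt_eq_one.mp h3
        exact this
      simpa [Real.norm_eq_abs, sq_abs] using h4
    have h2 : hH.eigenvalues i = v ⬝ᵥ M *ᵥ v := by
      simpa using h1
    have := hq v
    rw [hnorm] at this
    rw [h2]
    linarith
  rw [hdet]
  calc c ^ m = ∏ _i : Fin m, c := by simp
    _ ≤ ∏ i, hH.eigenvalues i :=
      Finset.prod_le_prod (fun i _ => hc) (fun i _ => key i)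




lemma quad_lower {m K : ℕ} (hK : 0 < K) {N : Matrix (Fin m) (Fin m) ℝ} {d : ℝ}
    (hd : 0 ≤ d) (hE : ∀ i k, |(N - ((K : ℝ))⁻¹ • 1) i k| ≤ d) (x : Fin m → ℝ) :
    ((K : ℝ)⁻¹ - (m : ℝ) * d) * ∑ i, x i ^ 2 ≤ x ⬝ᵥ N *ᵥ x := by
  set E : Matrix (Fin m) (Fin m) ℝ := N - ((K : ℝ))⁻¹ • 1 with hEdef
  have hN : ∀ i k, N i k = E i k + (K : ℝ)⁻¹ * (if i = k then 1 else 0) := by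
    intro i k
    have h : E i k = N i k - (K : ℝ)⁻¹ * (if i = k then 1 else 0) := by
      simp [hEdef, Matrix.sub_apply, Matrix.smul_apply, smul_eq_mul, Matrix.one_apply]
    rw [h]; ring
  have hdot : x ⬝ᵥ N *ᵥ x = ∑ i, ∑ k, x i * N i k * x k := by
    simp only [dotProduct, mulVec, Finset.mul_sum, mul_assoc]
  have hsplit : ∑ i, ∑ k, x i * N i k * x k
      = (∑ i, ∑ k, x i * E i k * x k) + (K : ℝ)⁻¹ * ∑ i, x i ^ 2 := by
    have h1 : ∀ i, ∑ k, x i * N i k * x k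
        = (∑ k, x i * E i k * x k) + (K : ℝ)⁻¹ * x i ^ 2 := by
      intro i
      have h2 : ∀ k, x i * N i k * x k
          = x i * E i k * x k + (if i = k then (K : ℝ)⁻¹ * x i * x k else 0) := by
        intro k; rw [hN i k]; by_cases h : i = k <;> simp [h] <;> ring
      rw [Finset.sum_congr rfl fun k _ => h2 k, Finset.sum_add_distrib]
      congr 1
      rw [Finset.sum_ite_eq Finset.univ i (fun k => (K : ℝ)⁻¹ * x i * x k)]
      simp only [Finset.mem_univ, if_pos]
      ring
    rw [Finset.sum_congr rfl fun i _ => h1 i, Finset.sum_add_distrib, ← Finset.mul_sum]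
  have habs : ∀ i k, -(|x i| * d * |x k|) ≤ x i * E i k * x k := by
    intro i k
    have h1 : |x i * E i k * x k| ≤ |x i| * d * |x k| := by
      rw [abs_mul, abs_mul]
      exact mul_le_mul_of_nonneg_right
        (mul_le_mul_of_nonneg_left (hE i k) (abs_nonneg _)) (abs_nonneg _)
    linarith [neg_abs_le (x i * E i k * x k)]
  have hQ1 : -(∑ i, ∑ k, |x i| * d * |x k|) ≤ ∑ i, ∑ k, x i * E i k * x k := by
    rw [← Finset.sum_neg_distrib]
    refine Finset.sum_le_sum fun i _ => ?_
    rw [← Finset.sum_neg_distrib]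
    exact Finset.sum_le_sum fun k _ => habs i k
  have hQ2 : ∑ i, ∑ k, |x i| * d * |x k| = d * (∑ i, |x i|) ^ 2 := by
    rw [pow_two, Finset.sum_mul_sum, Finset.mul_sum]
    refine Finset.sum_congr rfl fun i _ => ?_
    rw [Finset.mul_sum]
    exact Finset.sum_congr rfl fun k _ => by ring
  have h3 : (∑ i, |x i|) ^ 2 ≤ (m : ℝ) * ∑ i, x i ^ 2 := by
    have := sq_sum_le_card_mul_sum_sq (s := Finset.univ) (f := fun i : Fin m => |x i|)
    simpa [sq_abs, Finset.card_univ, Fintype.card_fin] using this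
  have hQ : -((m : ℝ) * d * ∑ i, x i ^ 2) ≤ ∑ i, ∑ k, x i * E i k * x k := by
    have : d * (∑ i, |x i|) ^ 2 ≤ (m : ℝ) * d * ∑ i, x i ^ 2 := by nlinarith
    rw [hQ2] at hQ1
    linarith
  rw [hdot, hsplit]
  linarith


end PropA


set_option maxHeartbeats 1000000 in
/-- **`‖Â‖_max → 0` implies Property A.**
If the maximal entry of `Â = (ÃÃᵀ)^{-1/2}Ã` tends to `0`, then for each `K ∈ ℕ` there
exist a constant `C > 0` (independent of `n`) and an `n₀` such that for all `n ≥ n₀` one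
can find pairwise disjoint non-empty subsets `I₁, …, I_K ⊆ {1, …, n}` with
`det(Â_{I_l} (Â_{I_l})ᵀ) ≥ C` for every `l`. -/
theorem propertyA_of_Ahat_max_tendsto_zero
    (m : ℕ) (hm : 0 < m)
    (A : ∀ n : ℕ, Matrix (Fin m) (Fin n) ℝ)
    (b : ∀ n : ℕ, Fin m → ℝ)
    (hApos : ∀ n, ∀ i j, 0 < A n i j)
    (hbpos : ∀ n, ∀ i, 0 < b n i)
    (hArank : ∀ n, m < n → (A n).rank = m)
    (hint : ∀ n, m < n → ∃ x : Fin n → ℝ, (∀ j, 0 < x j) ∧ (A n).mulVec x = b n)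
    -- the barycenter weights `w`:
    (w : ∀ n : ℕ, Fin n → ℝ)
    (hw : ∀ n, m < n → (∀ j, 0 < w n j) ∧
      (∃ u : Fin m → ℝ, w n = (A n).transpose.mulVec u) ∧
      (A n).mulVec (fun j => (w n j)⁻¹) = b n)
    -- `Ã_{ij} = A_{ij}/w_j`, `S = (ÃÃᵀ)^{1/2}`, `Â = S⁻¹Ã`:
    (Atil : ∀ n : ℕ, Matrix (Fin m) (Fin n) ℝ)
    (hAtil : ∀ n i j, Atil n i j = A n i j / w n j)
    (S : ∀ n : ℕ, Matrix (Fin m) (Fin m) ℝ)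
    (hS : ∀ n, m < n → (S n).PosDef ∧ S n * S n = Atil n * (Atil n).transpose)
    (Ahat : ∀ n : ℕ, Matrix (Fin m) (Fin n) ℝ)
    (hAhat : ∀ n, Ahat n = (S n)⁻¹ * Atil n)
    -- `‖Â‖_max → 0`:
    (hAmax : ∀ ε > (0 : ℝ), ∃ N, ∀ n ≥ N, ∀ i j, |Ahat n i j| < ε) :
    ∀ K : ℕ, 0 < K → ∃ C > (0 : ℝ), ∃ n₀ : ℕ, ∀ n ≥ n₀,
      ∃ I : Fin K → Finset (Fin n),
        (∀ l, (I l).Nonempty) ∧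
        (∀ l l', l ≠ l' → Disjoint (I l) (I l')) ∧
        (∀ l, C ≤ (((Ahat n).submatrix id (fun j : (I l : Finset (Fin n)) => (j : Fin n))) *
          ((Ahat n).submatrix id (fun j : (I l : Finset (Fin n)) => (j : Fin n))).transpose).det) := by
  intro K hK
  have hKR : (0 : ℝ) < K := by exact_mod_cast hK
  have hmR : (0 : ℝ) < m := by exact_mod_cast hm
  set c : ℝ := (2 * (K : ℝ))⁻¹ with hc
  have hcpos : 0 < c := by positivity
  refine ⟨c ^ m, by positivity, ?_⟩
  set ε : ℝ := (4 * (K : ℝ) * (m : ℝ) ^ 2)⁻¹ with hε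
  have hεpos : 0 < ε := by positivity
  obtain ⟨N, hN⟩ := hAmax ε hεpos
  refine ⟨max N (m + 1), ?_⟩
  intro n hn
  have hmn : m < n := lt_of_lt_of_le (Nat.lt_succ_self m) (le_trans (le_max_right N (m+1)) hn)
  have hent : ∀ i j, |Ahat n i j| < ε := hN n (le_trans (le_max_left N (m+1)) hn)
  obtain ⟨hpd, hSS⟩ := hS n hmn
  have hdetS : IsUnit (S n).det := isUnit_iff_ne_zero.mpr (ne_of_gt hpd.det_pos)
  have hsymm : (S n)ᵀ = S n := by
    have h := hpd.1
    rwa [Matrix.IsHermitian, Matrix.conjTranspose_eq_transpose_of_trivial] at h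
  have orth : Ahat n * (Ahat n)ᵀ = 1 := by
    rw [hAhat, Matrix.transpose_mul, Matrix.transpose_nonsing_inv, hsymm]
    rw [show (S n)⁻¹ * Atil n * ((Atil n)ᵀ * (S n)⁻¹)
        = (S n)⁻¹ * ((Atil n * (Atil n)ᵀ) * (S n)⁻¹) by
      rw [Matrix.mul_assoc, Matrix.mul_assoc]]
    rw [← hSS, Matrix.mul_assoc (S n) (S n) ((S n)⁻¹), Matrix.mul_nonsing_inv _ hdetS,
      Matrix.mul_one, Matrix.nonsing_inv_mul _ hdetS]
  set a := Ahat n with ha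
  set W : Fin n → Matrix (Fin m) (Fin m) ℝ :=
    fun j => Matrix.of fun i k => a i j * a k j with hW
  obtain ⟨hdisj, hmemb, hpot⟩ := PropA.buckets_spec hK W n
  set I : Fin K → Finset (Fin n) := PropA.buckets hK W n with hI
  set M : Fin K → Matrix (Fin m) (Fin m) ℝ := PropA.msum W I with hM
  -- the bucket sums add up to the identity
  have hWsum : ∑ j, W j = (1 : Matrix (Fin m) (Fin m) ℝ) := by
    ext i k
    rw [Matrix.sum_apply]
    calc ∑ j, W j i k = (a * aᵀ) i k := by
          rw [Matrix.mul_apply]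
          exact Finset.sum_congr rfl fun j _ => rfl
      _ = (1 : Matrix (Fin m) (Fin m) ℝ) i k := by rw [orth]
  have hbiUnion : Finset.univ.biUnion I = Finset.univ := by
    ext j
    simp only [Finset.mem_univ, iff_true, Finset.mem_biUnion]
    obtain ⟨l, hl⟩ := (hmemb j).mpr j.isLt
    exact ⟨l, trivial, hl⟩
  have hMsum : ∑ l, M l = (1 : Matrix (Fin m) (Fin m) ℝ) := by
    have hpw : ((Finset.univ : Finset (Fin K)) : Set (Fin K)).PairwiseDisjoint I :=
      fun l _ l' _ hne => hdisj l l' hne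
    calc ∑ l, M l = ∑ l, ∑ j ∈ I l, W j := rfl
      _ = ∑ j ∈ Finset.univ.biUnion I, W j := (Finset.sum_biUnion hpw).symm
      _ = ∑ j, W j := by rw [hbiUnion]
      _ = 1 := hWsum
  -- trace identity
  have htr : ∑ j, ∑ i, a i j ^ 2 = (m : ℝ) := by
    rw [Finset.sum_comm]
    have h1 : ∀ i, ∑ j, a i j ^ 2 = (a * aᵀ) i i := by
      intro i; rw [Matrix.mul_apply]
      exact Finset.sum_congr rfl fun j _ => by
        rw [Matrix.transpose_apply, pow_two]
    rw [Finset.sum_congr rfl fun i _ => h1 i, orth]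
    simp [Matrix.one_apply]
  -- column norms are small
  have hcol : ∀ j, ∑ i, a i j ^ 2 ≤ (m : ℝ) * ε ^ 2 := by
    intro j
    have h1 : ∀ i, a i j ^ 2 ≤ ε ^ 2 := by
      intro i
      nlinarith [hent i j, abs_nonneg (a i j), sq_abs (a i j)]
    calc ∑ i, a i j ^ 2 ≤ ∑ _i : Fin m, ε ^ 2 := Finset.sum_le_sum fun i _ => h1 i
      _ = (m : ℝ) * ε ^ 2 := by
        rw [Finset.sum_const, Finset.card_univ, Fintype.card_fin, nsmul_eq_mul]
  have hcolnonneg : ∀ j, 0 ≤ ∑ i, a i j ^ 2 :=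
    fun j => Finset.sum_nonneg fun i _ => sq_nonneg _
  have hipW : ∀ j, PropA.ip (W j) (W j) = (∑ i, a i j ^ 2) ^ 2 := by
    intro j
    rw [PropA.ip, pow_two, Finset.sum_mul_sum]
    refine Finset.sum_congr rfl fun i _ => Finset.sum_congr rfl fun k _ => ?_
    show (W j i k) * (W j i k) = a i j ^ 2 * a k j ^ 2
    show (a i j * a k j) * (a i j * a k j) = a i j ^ 2 * a k j ^ 2
    ring
  have hpotbound : PropA.pot K M ≤ (m : ℝ) ^ 2 * ε ^ 2 := by
    have h2 : ∑ j ∈ Finset.univ.filter (fun j : Fin n => (j : ℕ) < n), PropA.ip (W j) (W j)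
        = ∑ j, PropA.ip (W j) (W j) := by
      congr 1
      ext j; simp [j.isLt]
    have h3 : ∑ j, PropA.ip (W j) (W j) ≤ ((m : ℝ) * ε ^ 2) * ∑ j, ∑ i, a i j ^ 2 := by
      rw [Finset.mul_sum]
      refine Finset.sum_le_sum fun j _ => ?_
      rw [hipW j]
      nlinarith [hcol j, hcolnonneg j]
    have h4 := hpot
    rw [h2] at h4
    calc PropA.pot K M ≤ ((m : ℝ) * ε ^ 2) * ∑ j, ∑ i, a i j ^ 2 := le_trans h4 h3
      _ = (m : ℝ) ^ 2 * ε ^ 2 := by rw [htr]; ring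
  -- entrywise bound on the deviation
  have hEbound : ∀ l i k, |(M l - (K : ℝ)⁻¹ • 1) i k| ≤ (m : ℝ) * ε := by
    intro l i k
    set E : Matrix (Fin m) (Fin m) ℝ := M l - (K : ℝ)⁻¹ • 1 with hEdef
    have h1 : PropA.ip E E ≤ (m : ℝ) ^ 2 * ε ^ 2 := by
      have h2 : PropA.ip E E ≤ PropA.pot K M := by
        rw [PropA.pot, hMsum]
        exact Finset.single_le_sum
          (f := fun l' => PropA.ip (M l' - (K : ℝ)⁻¹ • 1) (M l' - (K : ℝ)⁻¹ • 1))
          (fun l' _ => PropA.ip_nonneg _) (Finset.mem_univ l)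
      linarith
    have h3 : E i k * E i k ≤ PropA.ip E E := by
      rw [PropA.ip]
      calc E i k * E i k ≤ ∑ k', E i k' * E i k' :=
            Finset.single_le_sum (f := fun k' => E i k' * E i k')
              (fun k' _ => mul_self_nonneg _) (Finset.mem_univ k)
        _ ≤ ∑ i', ∑ k', E i' k' * E i' k' :=
            Finset.single_le_sum (f := fun i' => ∑ k', E i' k' * E i' k')
              (fun i' _ => Finset.sum_nonneg fun k' _ => mul_self_nonneg _)
              (Finset.mem_univ i)
    have h4 : E i k * E i k ≤ ((m : ℝ) * ε) ^ 2 := by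
      calc E i k * E i k ≤ (m : ℝ) ^ 2 * ε ^ 2 := le_trans h3 h1
        _ = ((m : ℝ) * ε) ^ 2 := by ring
    nlinarith [abs_nonneg (E i k), sq_abs (E i k), mul_pos hmR hεpos]
  -- quadratic form lower bound
  have hquad : ∀ l (x : Fin m → ℝ), c * ∑ i, x i ^ 2 ≤ x ⬝ᵥ (M l) *ᵥ x := by
    intro l x
    have h1 := PropA.quad_lower (N := M l) hK (le_of_lt (mul_pos hmR hεpos)) (hEbound l) x
    have h2 : c ≤ (K : ℝ)⁻¹ - (m : ℝ) * ((m : ℝ) * ε) := by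
      rw [hc, hε]
      rw [show (m : ℝ) * ((m : ℝ) * (4 * (K : ℝ) * (m : ℝ) ^ 2)⁻¹) = (4 * (K : ℝ))⁻¹ by
        field_simp]
      rw [inv_eq_one_div, inv_eq_one_div, inv_eq_one_div]
      rw [div_sub_div _ _ (by positivity) (by positivity), div_le_div_iff₀ (by positivity) (by positivity)]
      nlinarith
    have h3 : 0 ≤ ∑ i, x i ^ 2 := Finset.sum_nonneg fun i _ => sq_nonneg _
    nlinarith
  -- hermitian
  have hherm : ∀ l, (M l).IsHermitian := by
    intro l
    have hsym' : ∀ i k, M l k i = M l i k := by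
      intro i k
      show (∑ j ∈ I l, W j) k i = (∑ j ∈ I l, W j) i k
      rw [Matrix.sum_apply, Matrix.sum_apply]
      exact Finset.sum_congr rfl fun j _ => mul_comm _ _
    rw [Matrix.IsHermitian]
    ext i k
    rw [Matrix.conjTranspose_apply, star_trivial]
    exact hsym' i k
  -- the submatrix product is the bucket sum
  have hGM : ∀ l, ((Ahat n).submatrix id (fun j : (I l : Finset (Fin n)) => (j : Fin n))) *
      ((Ahat n).submatrix id (fun j : (I l : Finset (Fin n)) => (j : Fin n))).transpose = M l := by
    intro l
    ext i k
    rw [Matrix.mul_apply]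
    calc ∑ j : (I l : Finset (Fin n)),
          (Ahat n).submatrix id (fun j : (I l : Finset (Fin n)) => (j : Fin n)) i j *
          ((Ahat n).submatrix id (fun j : (I l : Finset (Fin n)) => (j : Fin n)))ᵀ j k
        = ∑ j : (I l : Finset (Fin n)), a i (j : Fin n) * a k (j : Fin n) := by
          refine Finset.sum_congr rfl fun j _ => ?_
          rw [Matrix.transpose_apply]
          rfl
      _ = ∑ j ∈ I l, a i j * a k j := Finset.sum_coe_sort (I l) (fun j => a i j * a k j)
      _ = M l i k := by
          rw [hM]
          show ∑ j ∈ I l, a i j * a k j = (∑ j ∈ I l, W j) i k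
          rw [Matrix.sum_apply]
          exact Finset.sum_congr rfl fun j _ => rfl
  -- determinant bound
  have hdet : ∀ l, c ^ m ≤ (((Ahat n).submatrix id (fun j : (I l : Finset (Fin n)) => (j : Fin n))) *
      ((Ahat n).submatrix id (fun j : (I l : Finset (Fin n)) => (j : Fin n))).transpose).det := by
    intro l
    rw [hGM l]
    exact PropA.det_ge_pow (hherm l) (le_of_lt hcpos) (hquad l)
  -- nonemptiness
  have hne : ∀ l, (I l).Nonempty := by
    intro l
    rw [Finset.nonempty_iff_ne_empty]
    intro hempty
    have hM0 : M l = 0 := by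
      rw [hM]
      show ∑ j ∈ I l, W j = 0
      rw [hempty, Finset.sum_empty]
    have h1 := hquad l (fun _ => 1)
    rw [hM0] at h1
    simp only [Matrix.zero_mulVec, dotProduct_zero, one_pow] at h1
    have h2 : ∑ _i : Fin m, (1 : ℝ) = (m : ℝ) := by
      rw [Finset.sum_const, Finset.card_univ, Fintype.card_fin, nsmul_eq_mul, mul_one]
    rw [h2] at h1
    nlinarith [mul_pos hcpos hmR]
  exact ⟨I, hne, hdisj, hdet⟩
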